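/- Let $\{\omega_n\}$ be i.i.d. with symmetric distribution $\mu$ satisfying $\mu((-R,R)^c) \le CR^{-\delta}$, let $a_n \sim n^{-\alpha}$ with $\alpha - 1/\delta > 1/2$, fix $\theta \in (0,\pi)$, and let $\tilde{y}^\omega_L(\theta) = y^\omega_L(\theta) - L\theta$ where $y^\omega_L$ is the Prüfer phase of $H^\omega$ at energy $2\cos\theta$. Then there exists a measurable function $g_\theta : \Omega \to [-\infty,\infty]$ such that for every $\epsilon > 0$, $\mathbb{P}[|\tilde{y}^\omega_L(\theta) - g^\omega_\theta| > \epsilon] \to 0$ as $L \to \infty$; i.e., $\tilde{y}^\omega_L(\theta)$ converges in probability. -/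

import Mathlib

open MeasureTheory Filter Real

noncomputable def trunc' (R t : ℝ) : ℝ := if |t| < R then t else 0

lemma measurable_trunc' (R : ℝ) : Measurable (trunc' R) := by
  unfold trunc'
  exact Measurable.ite (measurableSet_lt (by fun_prop) measurable_const) measurable_id
    measurable_const

lemma abs_trunc'_le (R t : ℝ) (hR : 0 ≤ R) : |trunc' R t| ≤ R := by
  unfold trunc'
  split
  · exact le_of_lt (by assumption)
  · simpa using hR

lemma measurable_carg : Measurable Complex.arg := by
  unfold Complex.arg
  refine Measurable.ite (measurableSet_le measurable_const (by fun_prop)) ?_ ?_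
  · exact Real.continuous_arcsin.measurable.comp
      (Complex.measurable_im.div continuous_norm.measurable)
  · refine Measurable.ite (measurableSet_le measurable_const Complex.measurable_im) ?_ ?_
    · exact (Real.continuous_arcsin.measurable.comp
        ((Complex.measurable_im.comp (measurable_id.neg)).div
          continuous_norm.measurable)).add measurable_const
    · exact (Real.continuous_arcsin.measurable.comp
        ((Complex.measurable_im.comp (measurable_id.neg)).div
          continuous_norm.measurable)).sub measurable_const

lemma measurable_clog_im : Measurable (fun z : ℂ => (Complex.log z).im) := by
  simpa [Complex.log_im] using measurable_carg

lemma im_log_bound {z : ℂ} (hz : ‖z‖ ≤ 1/2) :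
    |(Complex.log (1 - z)).im + z.im| ≤ ‖z‖ ^ 2 := by
  have h1 : ‖z‖ ≤ 1/2 := hz
  have h2 : ‖(-z)‖ < 1 := by rw [norm_neg]; linarith
  have h3 : ‖Complex.log (1 + -z) - -z‖ ≤ ‖(-z)‖^2 * (1 - ‖(-z)‖)⁻¹ / 2 :=
    Complex.norm_log_one_add_sub_self_le h2
  have h4 : (1 - ‖(-z)‖)⁻¹ ≤ 2 := by
    rw [norm_neg]
    rw [inv_le_comm₀ (by linarith [norm_nonneg z]) (by norm_num)]
    linarith
  have h5 : ‖Complex.log (1 - z) + z‖ ≤ ‖z‖^2 := by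
    have : Complex.log (1 - z) + z = Complex.log (1 + -z) - -z := by ring_nf
    rw [this]
    calc ‖Complex.log (1 + -z) - -z‖ ≤ ‖(-z)‖^2 * (1 - ‖(-z)‖)⁻¹ / 2 := h3
    _ ≤ ‖z‖^2 * 2 / 2 := by
        rw [norm_neg] at h4
        rw [norm_neg]
        gcongr
    _ = ‖z‖^2 := by ring
  calc |(Complex.log (1 - z)).im + z.im| = |(Complex.log (1 - z) + z).im| := by simp
  _ ≤ ‖Complex.log (1 - z) + z‖ := Complex.abs_im_le_norm _
  _ ≤ ‖z‖^2 := h5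

lemma aux_meas {Ω : Type*} {m : MeasurableSpace Ω} {u v : Ω → ℝ}
    (hu : Measurable u) (hv : Measurable v) (c d : ℝ) :
    Measurable (fun x => (Complex.log (1 - (↑(c * u x * Real.sin (v x) / d) *
      Complex.exp (-(↑(v x) * Complex.I))))).im) := by
  apply measurable_clog_im.comp
  apply Measurable.sub measurable_const
  apply Measurable.mul
  · exact Complex.measurable_ofReal.comp
      (((measurable_const.mul hu).mul (Real.measurable_sin.comp hv)).div_const d)
  · exact Complex.continuous_exp.measurable.comp
      (((Complex.measurable_ofReal.comp hv).mul_const Complex.I).neg)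

set_option maxHeartbeats 2000000 in
theorem pruefer_phase_converges_in_probability
    {Ω : Type*} [MeasurableSpace Ω] (P : Measure Ω) [IsProbabilityMeasure P]
    (μ : Measure ℝ) [IsProbabilityMeasure μ]
    (ω : ℕ → Ω → ℝ) (hmeas : ∀ n, Measurable (ω n))
    (hiid : ProbabilityTheory.iIndepFun ω P)
    (hdist : ∀ n, Measure.map (ω n) P = μ)
    (hsymm : ∀ K : ℝ, 0 < K → ∫ t in Set.Ioo (-K) K, t ∂μ = 0)
    (C R₀ δ α : ℝ) (hC : 0 < C) (hR₀ : 0 < R₀) (hδ : 0 < δ)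
    (hα : 1 / 2 < α - 1 / δ)
    (htail : ∀ R : ℝ, R₀ ≤ R → μ {t : ℝ | R ≤ |t|} ≤ ENNReal.ofReal (C * R ^ (-δ)))
    (a : ℕ → ℝ) (ha : Tendsto (fun n : ℕ => a n * (n : ℝ) ^ α) atTop (nhds 1))
    (θ : ℝ) (hθ : θ ∈ Set.Ioo 0 π)
    (y : ℕ → Ω → ℝ) (hy1 : ∀ x : Ω, y 1 x = θ)
    (hyrec : ∀ n : ℕ, 1 ≤ n → ∀ x : Ω,
      y (n + 1) x = y n x + θ +
        (Complex.log (1 - (↑(a n * ω n x * Real.sin (y n x) / Real.sin θ) *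
          Complex.exp (-(↑(y n x) * Complex.I))))).im) :
    ∃ g : Ω → ℝ, Measurable g ∧
      ∀ ε : ℝ, 0 < ε →
        Tendsto (fun L : ℕ => P {x : Ω | ε < |(y L x - (L : ℝ) * θ) - g x|})
          atTop (nhds 0) := by
  obtain ⟨hθ0, hθπ⟩ := hθ
  have hsθ : 0 < Real.sin θ := Real.sin_pos_of_pos_of_lt_pi hθ0 hθπ
  have hδ' : (0:ℝ) < 1/δ := by positivity
  set γ : ℝ := (1/δ + (α - 1/2))/2 with hγdef
  have hγ1 : 1/δ < γ := by rw [hγdef]; linarith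
  have hγ2 : γ < α - 1/2 := by rw [hγdef]; linarith
  have hγ0 : 0 < γ := lt_trans hδ' hγ1
  have hγδ : 1 < γ * δ := by
    have := (div_lt_iff₀ hδ).mp hγ1
    linarith
  have h2αγ : 1 < 2*(α - γ) := by linarith
  set T : ℕ → ℝ := fun n => (n:ℝ)^γ with hT
  have hT0 : ∀ n, 0 ≤ T n := fun n => Real.rpow_nonneg (Nat.cast_nonneg n) γ
  set W : ℕ → Ω → ℝ := fun n x => trunc' (T n) (ω n x) with hWdef
  set M : ℕ → Ω → ℝ := fun n x => a n * W n x * Real.sin (y n x)^2 / Real.sin θ with hMdef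
  set X : ℕ → Ω → ℝ := fun k x => ∑ n ∈ Finset.range k, M (n+1) x with hXdef
  set b : ℕ → ℝ := fun n => |a n| * T n / Real.sin θ with hbdef
  have hb_nonneg : ∀ n, 0 ≤ b n := fun n => by
    rw [hbdef]
    have := hT0 n
    positivity
  set f : ℕ → Ω → ℝ := fun n x => y (n+1) x - y n x - θ with hfdef
  set ℱ := MeasureTheory.Filtration.natural ω (fun n => (hmeas n).stronglyMeasurable) with hℱ
  -- eventual bound on |a n| n^γ
  have haev : ∀ᶠ n : ℕ in atTop, |a n| * T n ≤ 2 * (n:ℝ)^(γ - α) := by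
    have h2 : ∀ᶠ n : ℕ in atTop, |a n * (n:ℝ)^α| ≤ 2 := by
      have h := ha.abs
      rw [abs_one] at h
      exact h.eventually_le_const (by norm_num)
    filter_upwards [h2, eventually_ge_atTop 1] with n hn hn1
    have hnpos : (0:ℝ) < (n:ℝ) := by exact_mod_cast hn1
    have hTeq : T n = (n:ℝ)^α * (n:ℝ)^(γ-α) := by
      rw [hT, ← Real.rpow_add hnpos]
      ring_nf
    calc |a n| * T n = |a n * (n:ℝ)^α| * (n:ℝ)^(γ-α) := by
          rw [hTeq, abs_mul, abs_of_pos (Real.rpow_pos_of_pos hnpos α)]; ring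
    _ ≤ 2 * (n:ℝ)^(γ-α) := by
          have := Real.rpow_nonneg (le_of_lt hnpos) (γ-α)
          gcongr
  have hb_ev : ∀ᶠ n : ℕ in atTop, b n ≤ (2 / Real.sin θ) * (n:ℝ)^(γ - α) := by
    filter_upwards [haev] with n hn
    have hEq : b n = |a n| * T n / Real.sin θ := rfl
    rw [hEq, div_mul_eq_mul_div]
    gcongr
  have hb0 : Tendsto b atTop (nhds 0) := by
    have hrp : Tendsto (fun n : ℕ => (n:ℝ)^(γ-α)) atTop (nhds 0) := by
      have h1 : Tendsto (fun x : ℝ => x^(γ-α)) atTop (nhds 0) := by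
        have := tendsto_rpow_neg_atTop (by linarith : (0:ℝ) < α - γ)
        simpa [neg_sub] using this
      exact h1.comp tendsto_natCast_atTop_atTop
    have hg : Tendsto (fun n : ℕ => (2 / Real.sin θ) * (n:ℝ)^(γ-α)) atTop (nhds 0) := by
      have := hrp.const_mul (2 / Real.sin θ)
      simpa using this
    exact squeeze_zero' (Eventually.of_forall hb_nonneg) hb_ev hg
  have hb2 : Summable (fun n => b n ^ 2) := by
    have hsum : Summable (fun n : ℕ => (2 / Real.sin θ)^2 * (n:ℝ)^(2*(γ-α))) := by
      refine Summable.mul_left _ ?_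
      exact Real.summable_nat_rpow.mpr (by linarith)
    refine Summable.of_norm_bounded_eventually_nat hsum ?_
    filter_upwards [hb_ev] with n hn
    have h1 : ((n:ℝ)^(γ-α))^(2:ℕ) = (n:ℝ)^(2*(γ-α)) := by
      rw [← Real.rpow_natCast ((n:ℝ)^(γ-α)) 2, ← Real.rpow_mul (Nat.cast_nonneg n)]
      norm_num [mul_comm]
    have h2 : b n ^ 2 ≤ ((2 / Real.sin θ) * (n:ℝ)^(γ-α))^2 :=
      pow_le_pow_left₀ (hb_nonneg n) hn 2
    rw [Real.norm_eq_abs, abs_of_nonneg (pow_nonneg (hb_nonneg n) 2)]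
    calc b n ^2 ≤ ((2 / Real.sin θ) * (n:ℝ)^(γ-α))^2 := h2
    _ = (2 / Real.sin θ)^2 * (n:ℝ)^(2*(γ-α)) := by rw [mul_pow, h1]
  -- Borel-Cantelli
  have hBC : ∀ᵐ x ∂P, ∀ᶠ n in atTop, |ω n x| < T n := by
    have hsetmeas : ∀ n, MeasurableSet {t : ℝ | T n ≤ |t|} :=
      fun n => measurableSet_le measurable_const continuous_abs.measurable
    have hPs : ∀ n, P (ω n ⁻¹' {t : ℝ | T n ≤ |t|}) = μ {t : ℝ | T n ≤ |t|} := by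
      intro n
      rw [← hdist n, Measure.map_apply (hmeas n) (hsetmeas n)]
    obtain ⟨N₂, hN₂⟩ : ∃ N₂ : ℕ, ∀ n ≥ N₂, R₀ ≤ T n := by
      have hTT : Tendsto T atTop atTop :=
        (tendsto_rpow_atTop hγ0).comp tendsto_natCast_atTop_atTop
      exact eventually_atTop.mp (hTT.eventually_ge_atTop R₀)
    set v : ℕ → ℝ := fun n => if n < N₂ then 1 else C * (n:ℝ)^(-(γ*δ)) with hvdef
    have hv_nonneg : ∀ n, 0 ≤ v n := by
      intro n
      rw [hvdef]
      dsimp only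
      split
      · norm_num
      · have := Real.rpow_nonneg (Nat.cast_nonneg n) (-(γ*δ)); positivity
    have hv_sum : Summable v := by
      refine (_root_.summable_nat_add_iff (G := ℝ) (f := v) N₂).mp ?_
      have h1 : Summable (fun n : ℕ => C * ((n + N₂ : ℕ):ℝ)^(-(γ*δ))) := by
        exact (_root_.summable_nat_add_iff
          (f := fun n : ℕ => C * ((n:ℕ):ℝ)^(-(γ*δ))) N₂).mpr
          ((Real.summable_nat_rpow.mpr (by linarith)).mul_left C)
      refine h1.congr ?_
      intro n
      simp only [hvdef]
      rw [if_neg (by omega)]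
    have hbound : ∀ n, P (ω n ⁻¹' {t : ℝ | T n ≤ |t|}) ≤ ENNReal.ofReal (v n) := by
      intro n
      rw [hPs n, hvdef]
      dsimp only
      split
      · simpa using prob_le_one
      · rename_i hnn
        have hn2 : N₂ ≤ n := by omega
        have h3 := htail (T n) (hN₂ n hn2)
        have h4 : (T n) ^ (-δ) = (n:ℝ)^(-(γ*δ)) := by
          rw [hT]
          rw [← Real.rpow_mul (Nat.cast_nonneg n)]
          ring_nf
        rw [h4] at h3
        exact h3
    have hBCsum : (∑' n, P (ω n ⁻¹' {t : ℝ | T n ≤ |t|})) ≠ ⊤ := by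
      have h1 : (∑' n, P (ω n ⁻¹' {t : ℝ | T n ≤ |t|})) ≤ ∑' n, ENNReal.ofReal (v n) :=
        ENNReal.tsum_le_tsum hbound
      have h2 : (∑' n, ENNReal.ofReal (v n)) = ENNReal.ofReal (∑' n, v n) :=
        (ENNReal.ofReal_tsum_of_nonneg hv_nonneg hv_sum).symm
      rw [h2] at h1
      exact ne_top_of_le_ne_top ENNReal.ofReal_ne_top h1
    filter_upwards [ae_eventually_notMem hBCsum] with x hx
    filter_upwards [hx] with n hn
    simp only [Set.mem_preimage, Set.mem_setOf_eq, not_le] at hn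
    exact hn
  -- measurability along the filtration
  have hω_natural : ∀ k, Measurable[ℱ k] (ω k) := by
    intro k
    have h := MeasureTheory.Filtration.stronglyAdapted_natural
      (u := ω) (fun n => (hmeas n).stronglyMeasurable) k
    exact h.measurable
  have hy_measF : ∀ k, Measurable[ℱ k] (y (k+1)) := by
    intro k
    induction k with
    | zero =>
      have : y 1 = fun _ => θ := funext hy1
      rw [this]
      exact measurable_const
    | succ k ih =>
      have hrec : y (k+1+1) = fun x => y (k+1) x + θ +
          (Complex.log (1 - (↑(a (k+1) * ω (k+1) x * Real.sin (y (k+1) x) / Real.sin θ) *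
            Complex.exp (-(↑(y (k+1) x) * Complex.I))))).im :=
        funext (hyrec (k+1) (by omega))
      rw [hrec]
      have ih' : Measurable[ℱ (k+1)] (y (k+1)) := ih.mono (ℱ.mono (Nat.le_succ k)) le_rfl
      have hω' : Measurable[ℱ (k+1)] (ω (k+1)) := hω_natural (k+1)
      exact ((ih'.add measurable_const).add (aux_meas hω' ih' (a (k+1)) (Real.sin θ)))
  have hy_meas : ∀ k, Measurable (y (k+1)) :=
    fun k => (hy_measF k).mono (ℱ.le k) le_rfl
  -- bounds and integrability
  have hMb : ∀ n x, |M n x| ≤ b n := by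
    intro n x
    have h1 : |W n x| ≤ T n := abs_trunc'_le _ _ (hT0 n)
    have h2 : |Real.sin (y n x)^2| ≤ 1 := by
      rw [abs_of_nonneg (sq_nonneg _)]
      exact Real.sin_sq_le_one _
    have hEq : M n x = a n * W n x * Real.sin (y n x)^2 / Real.sin θ := rfl
    have hbEq : b n = |a n| * T n / Real.sin θ := rfl
    rw [hEq, hbEq, abs_div, abs_of_pos hsθ, abs_mul, abs_mul]
    calc |a n| * |W n x| * |Real.sin (y n x)^2| / Real.sin θ
        ≤ |a n| * T n * 1 / Real.sin θ := by
          gcongr <;> exact abs_nonneg _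
    _ = |a n| * T n / Real.sin θ := by ring
  have hM_measF : ∀ k, Measurable[ℱ (k+1)] (M (k+1)) := by
    intro k
    have hy' : Measurable[ℱ (k+1)] (y (k+1)) := (hy_measF k).mono (ℱ.mono (Nat.le_succ k)) le_rfl
    have hω' : Measurable[ℱ (k+1)] (ω (k+1)) := hω_natural (k+1)
    exact ((measurable_const.mul ((measurable_trunc' _).comp hω')).mul
      ((Real.measurable_sin.comp hy').pow_const 2)).div_const _
  have hint : ∀ (h : Ω → ℝ), Measurable h → ∀ B : ℝ, (∀ x, |h x| ≤ B) → Integrable h P :=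
    fun h hh B hB => ⟨hh.aestronglyMeasurable,
      HasFiniteIntegral.of_bounded (C := B) (Eventually.of_forall (by
        simpa [Real.norm_eq_abs] using hB))⟩
  have hM_meas : ∀ k, Measurable (M (k+1)) :=
    fun k => (hM_measF k).mono (ℱ.le (k+1)) le_rfl
  have hM_int : ∀ k, Integrable (M (k+1)) P :=
    fun k => hint _ (hM_meas k) (b (k+1)) (fun x => hMb (k+1) x)
  have hW_int : ∀ n, Integrable (W n) P := fun n =>
    hint _ ((measurable_trunc' _).comp (hmeas n)) (T n)
      (fun x => abs_trunc'_le _ _ (hT0 n))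
  -- mean zero of truncated variables
  have hWmean : ∀ k, ∫ x, W (k+1) x ∂P = 0 := by
    intro k
    have hTpos : 0 < T (k+1) :=
      Real.rpow_pos_of_pos (by exact_mod_cast Nat.succ_pos k) γ
    have h1 : ∫ x, W (k+1) x ∂P = ∫ t, trunc' (T (k+1)) t ∂μ := by
      rw [← hdist (k+1)]
      exact (integral_map (hmeas (k+1)).aemeasurable
        (measurable_trunc' _).stronglyMeasurable.aestronglyMeasurable).symm
    rw [h1]
    have h2 : (fun t : ℝ => trunc' (T (k+1)) t) =
        (Set.Ioo (-(T (k+1))) (T (k+1))).indicator id := by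
      funext t
      simp only [trunc', Set.indicator_apply, Set.mem_Ioo, id_eq]
      exact if_congr abs_lt rfl rfl
    rw [h2, integral_indicator measurableSet_Ioo]
    simpa using hsymm (T (k+1)) hTpos
  -- conditional expectation of increments vanishes
  have hcond0 : ∀ k, P[M (k+1)|ℱ k] =ᵐ[P] 0 := by
    intro k
    set Z : Ω → ℝ := fun x => a (k+1) * Real.sin (y (k+1) x)^2 / Real.sin θ with hZdef
    have hMZ : M (k+1) = Z * W (k+1) := by
      funext x
      show a (k+1) * W (k+1) x * Real.sin (y (k+1) x)^2 / Real.sin θ = _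
      simp only [Pi.mul_apply, hZdef]
      ring
    have hZ_sm : StronglyMeasurable[ℱ k] Z :=
      ((measurable_const.mul ((Real.measurable_sin.comp
        (hy_measF k)).pow_const 2)).div_const _).stronglyMeasurable
    have hZW_int : Integrable (Z * W (k+1)) P := hMZ ▸ hM_int k
    have h1 : P[M (k+1)|ℱ k] =ᵐ[P] Z * P[W (k+1)|ℱ k] := by
      rw [hMZ]
      exact condExp_mul_of_stronglyMeasurable_left hZ_sm hZW_int (hW_int (k+1))
    have hWsm : StronglyMeasurable[MeasurableSpace.comap (ω (k+1)) inferInstance] (W (k+1)) := by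
      refine Measurable.stronglyMeasurable ?_
      have hm : Measurable[MeasurableSpace.comap (ω (k+1)) inferInstance] (ω (k+1)) :=
        fun s hs => ⟨s, hs, rfl⟩
      exact (measurable_trunc' _).comp hm
    have hindep : ProbabilityTheory.Indep
        (MeasurableSpace.comap (ω (k+1)) inferInstance) (ℱ k) P := by
      have h := ProbabilityTheory.indep_iSup_of_disjoint
        (m := fun i => MeasurableSpace.comap (ω i) inferInstance)
        (fun i => (hmeas i).comap_le) hiid.iIndep
        (S := {k+1}) (T := {j : ℕ | j ≤ k}) (by
          rw [Set.disjoint_left]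
          intro i hi hi'
          simp only [Set.mem_singleton_iff] at hi
          simp only [Set.mem_setOf_eq] at hi'
          omega)
      have e1 : (⨆ i ∈ ({k+1} : Set ℕ), MeasurableSpace.comap (ω i) inferInstance) =
          MeasurableSpace.comap (ω (k+1)) inferInstance := by
        simp
      have e2 : (⨆ i ∈ {j : ℕ | j ≤ k}, MeasurableSpace.comap (ω i) inferInstance) = ℱ k := by
        have : ℱ k = ⨆ i, ⨆ _ : i ≤ k, MeasurableSpace.comap (ω i) inferInstance := rfl
        rw [this]
        simp only [Set.mem_setOf_eq]
      rw [e1, e2] at h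
      exact h
    have h2 : P[W (k+1)|ℱ k] =ᵐ[P] fun _ => ∫ x, W (k+1) x ∂P :=
      condExp_indep_eq (hmeas (k+1)).comap_le (ℱ.le k) hWsm hindep
    rw [hWmean k] at h2
    refine h1.trans ?_
    filter_upwards [h2] with x hx
    simp only [Pi.mul_apply, hx, mul_zero, Pi.zero_apply]
  -- martingale property
  have hX_adp : StronglyAdapted ℱ X := by
    intro k
    exact Finset.stronglyMeasurable_fun_sum _ (fun n hn =>
      ((hM_measF n).mono (ℱ.mono (Nat.succ_le_of_lt (Finset.mem_range.mp hn)))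
        le_rfl).stronglyMeasurable)
  have hX_int : ∀ k, Integrable (X k) P := fun k =>
    integrable_finset_sum _ (fun n _ => hM_int n)
  have hmart : Martingale X ℱ P := by
    refine martingale_nat hX_adp hX_int (fun k => ?_)
    have hstep : X (k+1) = X k + M (k+1) := by
      funext x
      exact Finset.sum_range_succ _ k
    rw [hstep]
    have h1 : P[X k + M (k+1)|ℱ k] =ᵐ[P] P[X k|ℱ k] + P[M (k+1)|ℱ k] :=
      condExp_add (hX_int k) (hM_int k) _
    have h2 : P[X k|ℱ k] = X k :=
      condExp_of_stronglyMeasurable (ℱ.le k) (hX_adp k) (hX_int k)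
    refine EventuallyEq.symm (h1.trans ?_)
    rw [h2]
    filter_upwards [hcond0 k] with x hx
    simp only [Pi.add_apply, hx, Pi.zero_apply, add_zero]
  -- L² bound
  have hb2' : Summable (fun n => b (n+1)^2) := (summable_nat_add_iff 1).mpr hb2
  set V : ℝ := ∑' n, b (n+1)^2 with hVdef
  have hX_meas : ∀ k, Measurable (X k) := fun k =>
    ((hX_adp k).measurable).mono (ℱ.le k) le_rfl
  have hXb : ∀ k x, |X k x| ≤ ∑ n ∈ Finset.range k, b (n+1) := by
    intro k x
    have hEq : X k x = ∑ n ∈ Finset.range k, M (n+1) x := rfl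
    rw [hEq]
    refine (Finset.abs_sum_le_sum_abs _ _).trans ?_
    exact Finset.sum_le_sum (fun n _ => hMb (n+1) x)
  have hBnn : ∀ k, 0 ≤ ∑ n ∈ Finset.range k, b (n+1) :=
    fun k => Finset.sum_nonneg (fun n _ => hb_nonneg _)
  have hXsq_int : ∀ k, Integrable (fun x => X k x^2) P := fun k =>
    hint _ ((hX_meas k).pow_const 2) ((∑ n ∈ Finset.range k, b (n+1))^2) (fun x => by
      rw [abs_of_nonneg (sq_nonneg _)]
      calc X k x^2 = |X k x|^2 := (sq_abs _).symm
      _ ≤ _ := pow_le_pow_left₀ (abs_nonneg _) (hXb k x) 2)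
  have hXM_int : ∀ k, Integrable (fun x => X k x * M (k+1) x) P := fun k =>
    hint _ ((hX_meas k).mul (hM_meas k))
      ((∑ n ∈ Finset.range k, b (n+1)) * b (k+1)) (fun x => by
      rw [abs_mul]
      exact mul_le_mul (hXb k x) (hMb (k+1) x) (abs_nonneg _) (hBnn k))
  have hMsq_int : ∀ k, Integrable (fun x => M (k+1) x^2) P := fun k =>
    hint _ ((hM_meas k).pow_const 2) (b (k+1)^2) (fun x => by
      rw [abs_of_nonneg (sq_nonneg _)]
      calc M (k+1) x^2 = |M (k+1) x|^2 := (sq_abs _).symm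
      _ ≤ _ := pow_le_pow_left₀ (abs_nonneg _) (hMb (k+1) x) 2)
  have hcross : ∀ k, ∫ x, X k x * M (k+1) x ∂P = 0 := by
    intro k
    have h1 : P[(X k) * (M (k+1))|ℱ k] =ᵐ[P] X k * P[M (k+1)|ℱ k] :=
      condExp_mul_of_stronglyMeasurable_left (hX_adp k) (hXM_int k) (hM_int k)
    have h4 : X k * P[M (k+1)|ℱ k] =ᵐ[P] 0 := by
      filter_upwards [hcond0 k] with x hx
      simp only [Pi.mul_apply, hx, Pi.zero_apply, mul_zero]
    have h2 : ∫ x, (P[(X k) * (M (k+1))|ℱ k]) x ∂P = ∫ x, (X k * M (k+1)) x ∂P :=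
      integral_condExp (ℱ.le k)
    have h3 : ∫ x, (P[(X k) * (M (k+1))|ℱ k]) x ∂P = 0 := by
      rw [integral_congr_ae (h1.trans h4)]
      simp
    have := h2.symm.trans h3
    simpa using this
  have hM2_le : ∀ k, ∫ x, M (k+1) x^2 ∂P ≤ b (k+1)^2 := by
    intro k
    calc ∫ x, M (k+1) x^2 ∂P ≤ ∫ _x, b (k+1)^2 ∂P := by
          refine integral_mono (hMsq_int k) (integrable_const _) (fun x => ?_)
          calc M (k+1) x^2 = |M (k+1) x|^2 := (sq_abs _).symm
          _ ≤ b (k+1)^2 := pow_le_pow_left₀ (abs_nonneg _) (hMb (k+1) x) 2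
    _ = b (k+1)^2 := by simp [measure_univ]
  have hL2partial : ∀ k, ∫ x, (X k x)^2 ∂P ≤ ∑ n ∈ Finset.range k, b (n+1)^2 := by
    intro k
    induction k with
    | zero =>
      have h0 : (fun x => (X 0 x)^2) = fun _ => (0:ℝ) := by
        funext x
        have : X 0 x = ∑ n ∈ Finset.range 0, M (n+1) x := rfl
        rw [this]
        simp
      rw [h0]
      simp
    | succ k ih =>
      have hstep : ∀ x, X (k+1) x = X k x + M (k+1) x := fun x => Finset.sum_range_succ _ k
      have hexp : (fun x => (X (k+1) x)^2) =
          fun x => X k x^2 + (2*(X k x * M (k+1) x) + M (k+1) x^2) := by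
        funext x
        rw [hstep x]
        ring
      rw [hexp,
        integral_add (g := fun x => 2*(X k x * M (k+1) x) + M (k+1) x^2) (hXsq_int k)
          (by exact ((hXM_int k).const_mul 2).add (hMsq_int k)),
        integral_add (g := fun x => M (k+1) x^2) ((hXM_int k).const_mul 2) (hMsq_int k),
        MeasureTheory.integral_const_mul, hcross k, Finset.sum_range_succ]
      have := hM2_le k
      linarith
  have hL2 : ∀ k, ∫ x, (X k x)^2 ∂P ≤ V := by
    intro k
    refine (hL2partial k).trans ?_
    exact hb2'.sum_le_tsum (Finset.range k) (fun n _ => sq_nonneg _)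
  -- L¹ bound
  have hR : ∀ k, eLpNorm (X k) 1 P ≤ ENNReal.ofReal ((1+V)/2) := by
    intro k
    have h1 : ∫ x, |X k x| ∂P ≤ (1+V)/2 := by
      have hpt : ∀ x, |X k x| ≤ (1 + X k x^2)/2 := fun x => by
        nlinarith [sq_nonneg (|X k x| - 1), sq_abs (X k x)]
      calc ∫ x, |X k x| ∂P ≤ ∫ x, (1 + X k x^2)/2 ∂P :=
            integral_mono (hX_int k).abs
              (((integrable_const 1).add (hXsq_int k)).div_const 2) hpt
      _ = (1 + ∫ x, X k x^2 ∂P)/2 := by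
            rw [integral_div, integral_add (integrable_const 1) (hXsq_int k)]
            simp [measure_univ]
      _ ≤ (1+V)/2 := by linarith [hL2 k]
    have h2 : eLpNorm (X k) 1 P = ENNReal.ofReal (∫ x, ‖X k x‖ ∂P) := by
      rw [eLpNorm_one_eq_lintegral_enorm, ← ofReal_integral_norm_eq_lintegral_enorm (hX_int k)]
    rw [h2]
    exact ENNReal.ofReal_le_ofReal (by simpa [Real.norm_eq_abs] using h1)
  have hXconv : ∀ᵐ x ∂P, ∃ l : ℝ, Tendsto (fun k => X k x) atTop (nhds l) := by
    have h := hmart.submartingale.ae_tendsto_limitProcess (R := ((1+V)/2).toNNReal)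
      (fun k => by simpa [ENNReal.ofReal] using hR k)
    filter_upwards [h] with x hx using ⟨_, hx⟩
  -- telescoping identity
  have hid : ∀ (k : ℕ) (x : Ω), y (k+1) x - ((k:ℝ)+1)*θ = ∑ n ∈ Finset.range k, f (n+1) x := by
    intro k
    induction k with
    | zero =>
      intro x
      simp [hy1 x]
    | succ k ih =>
      intro x
      rw [Finset.sum_range_succ, ← ih x]
      have hf1 : f (k+1) x = y (k+2) x - y (k+1) x - θ := rfl
      rw [hf1]
      push_cast
      ring
  -- key pointwise estimate
  have hfM : ∀ n x, 1 ≤ n → |ω n x| < T n → b n ≤ 1/2 → |f n x - M n x| ≤ b n^2 := by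
    intro n x hn hlt hb12
    set c : ℝ := a n * ω n x * Real.sin (y n x) / Real.sin θ with hcdef
    set z : ℂ := ↑c * Complex.exp (-(↑(y n x) * Complex.I)) with hzdef
    have hfe : f n x = (Complex.log (1 - z)).im := by
      have hfx : f n x = y (n+1) x - y n x - θ := rfl
      rw [hfx, hyrec n hn x]
      simp only [hzdef, hcdef]
      ring
    have habs : ‖z‖ ≤ b n := by
      have h1 : ‖z‖ = |c| := by
        simp only [hzdef]
        rw [norm_mul, Complex.norm_real, Real.norm_eq_abs]
        have he : -(↑(y n x) * Complex.I) = ↑(-(y n x)) * Complex.I := by push_cast; ring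
        rw [he, Complex.norm_exp_ofReal_mul_I, mul_one]
      rw [h1, hcdef]
      have hbEq : b n = |a n| * T n / Real.sin θ := rfl
      rw [hbEq, abs_div, abs_of_pos hsθ, abs_mul, abs_mul]
      have h2 : |Real.sin (y n x)| ≤ 1 := Real.abs_sin_le_one _
      calc |a n| * |ω n x| * |Real.sin (y n x)| / Real.sin θ
          ≤ |a n| * T n * 1 / Real.sin θ := by
            gcongr <;> exact abs_nonneg _
      _ = |a n| * T n / Real.sin θ := by ring
    have hz12 : ‖z‖ ≤ 1/2 := habs.trans hb12
    have hMx : M n x = a n * ω n x * Real.sin (y n x)^2 / Real.sin θ := by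
      have hm : M n x = a n * W n x * Real.sin (y n x)^2 / Real.sin θ := rfl
      have hw : W n x = ω n x := by
        have : W n x = trunc' (T n) (ω n x) := rfl
        rw [this]
        unfold trunc'
        rw [if_pos hlt]
      rw [hm, hw]
    have hzim : z.im = -(M n x) := by
      rw [hMx]
      simp only [hzdef]
      have he : -(↑(y n x) * Complex.I) = ↑(-(y n x)) * Complex.I := by push_cast; ring
      rw [he]
      simp only [Complex.mul_im, Complex.ofReal_re, Complex.ofReal_im,
        Complex.exp_ofReal_mul_I_im, Complex.exp_ofReal_mul_I_re, zero_mul, add_zero]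
      rw [Real.sin_neg, hcdef]
      ring
    calc |f n x - M n x| = |(Complex.log (1 - z)).im + z.im| := by
          rw [hfe, hzim]
          ring_nf
    _ ≤ ‖z‖^2 := im_log_bound hz12
    _ ≤ b n^2 := pow_le_pow_left₀ (norm_nonneg z) habs 2
  -- almost sure convergence
  have hae : ∀ᵐ x ∂P, ∃ l : ℝ, Tendsto (fun k => y (k+1) x - ((k:ℝ)+1)*θ) atTop (nhds l) := by
    have hdet2 : ∀ᶠ n : ℕ in atTop, b n ≤ 1/2 :=
      hb0.eventually_le_const (by norm_num)
    filter_upwards [hXconv, hBC] with x hxc hxb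
    obtain ⟨l, hl⟩ := hxc
    obtain ⟨N, hN⟩ := eventually_atTop.mp (hxb.and hdet2)
    have hd : Summable (fun n => f (n+1) x - M (n+1) x) := by
      refine (_root_.summable_nat_add_iff (G := ℝ)
        (f := fun n => f (n+1) x - M (n+1) x) N).mp ?_
      refine Summable.of_norm_bounded (g := fun n => b (n+N+1)^2) ?_ ?_
      · exact (_root_.summable_nat_add_iff (G := ℝ) (f := fun n => b (n+1)^2) N).mpr hb2'
      · intro n
        rw [Real.norm_eq_abs]
        have h := hN (n+N+1) (by omega)
        exact hfM (n+N+1) x (by omega) h.1 h.2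
    have hpartial := hd.hasSum.tendsto_sum_nat
    have hXsum : ∀ k, ∑ n ∈ Finset.range k, f (n+1) x =
        X k x + ∑ n ∈ Finset.range k, (f (n+1) x - M (n+1) x) := by
      intro k
      have hx0 : X k x = ∑ n ∈ Finset.range k, M (n+1) x := rfl
      rw [hx0, ← Finset.sum_add_distrib]
      exact Finset.sum_congr rfl (fun n _ => by ring)
    refine ⟨l + ∑' n, (f (n+1) x - M (n+1) x), ?_⟩
    have h2 : Tendsto (fun k => ∑ n ∈ Finset.range k, f (n+1) x) atTop
        (nhds (l + ∑' n, (f (n+1) x - M (n+1) x))) := by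
      refine Tendsto.congr (fun k => (hXsum k).symm) ?_
      exact hl.add hpartial
    exact Tendsto.congr (fun k => (hid k x).symm) h2
  obtain ⟨g, hgmeas, hg⟩ := measurable_limit_of_tendsto_metrizable_ae
    (f := fun k x => y (k+1) x - ((k:ℝ)+1)*θ) (L := atTop)
    (fun k => ((hy_meas k).sub measurable_const).aemeasurable) hae
  refine ⟨g, hgmeas, ?_⟩
  intro ε hε
  have hTIM : TendstoInMeasure P (fun k x => y (k+1) x - ((k:ℝ)+1)*θ) atTop g :=
    tendstoInMeasure_of_tendsto_ae
      (fun k => ((hy_meas k).sub measurable_const).aestronglyMeasurable) hg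
  have h1 := hTIM (ENNReal.ofReal ε) (ENNReal.ofReal_pos.mpr hε)
  rw [← tendsto_add_atTop_iff_nat 1]
  refine tendsto_of_tendsto_of_tendsto_of_le_of_le tendsto_const_nhds h1
    (fun k => zero_le) (fun k => measure_mono ?_)
  intro x hx
  simp only [Set.mem_setOf_eq] at hx ⊢
  rw [edist_dist, Real.dist_eq]
  push_cast at hx
  exact ENNReal.ofReal_le_ofReal (le_of_lt hx)
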